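/- Let M be a continuous local martingale with M(0) = 0, quadratic variation ⟨M⟩, and define stopping times τ_m(0) = 0, τ_m(k+1) = inf{ t > τ_m(k) : |M(t) − M(τ_m(k))| = 2^{−m} }. Let W be the Dambis–Dubins–Schwarz Brownian motion of M, i.e. M(t) = W(⟨M⟩_t), with Skorohod times s_m(k) for W. Then s_m(k) = ⟨M⟩_{τ_m(k)} and W(s_m(k)) = M(τ_m(k)) for all k with τ_m(k) < ∞. -/

import Mathlib

open scoped Classical ENNReal NNReal
open MeasureTheory ProbabilityTheory Filter Set

noncomputable section

/-- `W` is a standard Brownian motion on `(Ω, P)`: starts at `0`, has continuous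
paths, Gaussian increments `W_t - W_s ~ N(0, t-s)`, and independent increments. -/
def IsStandardBM {Ω : Type} [MeasurableSpace Ω] (P : Measure Ω) (W : ℝ → Ω → ℝ) : Prop :=
  (∀ t : ℝ, StronglyMeasurable (W t)) ∧
  (∀ ω, W 0 ω = 0) ∧
  (∀ ω, Continuous fun t => W t ω) ∧
  (∀ s t : ℝ, 0 ≤ s → s ≤ t →
    P.map (fun ω => W t ω - W s ω) = gaussianReal 0 (Real.toNNReal (t - s))) ∧
  (∀ n : ℕ, ∀ u : ℕ → ℝ, Monotone u → u 0 = 0 → (∀ i, 0 ≤ u i) →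
    iIndepFun
      (fun (i : Fin n) ω => W (u (i + 1)) ω - W (u i) ω) P)

/-- Pathwise Skorohod stopping times with step `2^{-m}`:
`s_m(0)=0`, `s_m(k+1) = inf{s > s_m(k) : |W(s) - W(s_m(k))| = 2^{-m}}`. -/
def skTime (Wp : ℝ → ℝ) (m : ℕ) : ℕ → ℝ
  | 0 => 0
  | k + 1 => sInf {s : ℝ | skTime Wp m k < s ∧
      |Wp s - Wp (skTime Wp m k)| = (2 : ℝ) ^ (-(m : ℤ))}

/-- The Skorohod-embedded walk `B_m`, with `B_m(k 2^{-2m}) = W(s_m(k))`, extended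
to real `t ≥ 0` by linear interpolation. -/
def embWalk (Wp : ℝ → ℝ) (m : ℕ) (t : ℝ) : ℝ :=
  (1 - (t * 2 ^ (2 * m) - (⌊t * 2 ^ (2 * m)⌋₊ : ℝ))) * Wp (skTime Wp m ⌊t * 2 ^ (2 * m)⌋₊) +
    (t * 2 ^ (2 * m) - (⌊t * 2 ^ (2 * m)⌋₊ : ℝ)) * Wp (skTime Wp m (⌊t * 2 ^ (2 * m)⌋₊ + 1))

/-- Pathwise Itô sum `(f(W)·W)^m_t`. -/
def itoSum (Wp : ℝ → ℝ) (f : ℝ → ℝ) (m : ℕ) (t : ℝ) : ℝ :=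
  ∑ r ∈ Finset.range ⌊t * 2 ^ (2 * m)⌋₊,
    f (Wp (skTime Wp m r)) * (Wp (skTime Wp m (r + 1)) - Wp (skTime Wp m r))

/-- Pathwise Stratonovich sum `(f(W)∘W)^m_t`. -/
def stratSum (Wp : ℝ → ℝ) (f : ℝ → ℝ) (m : ℕ) (t : ℝ) : ℝ :=
  ∑ r ∈ Finset.range ⌊t * 2 ^ (2 * m)⌋₊,
    (f (Wp (skTime Wp m r)) + f (Wp (skTime Wp m (r + 1)))) / 2 *
      (Wp (skTime Wp m (r + 1)) - Wp (skTime Wp m r))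

lemma skTime_time_change (Wp Ap Mp : ℝ → ℝ) (hWc : Continuous Wp) (hAc : Continuous Ap)
    (hAm : Monotone Ap) (hA0 : Ap 0 = 0) (hMW : ∀ t, Mp t = Wp (Ap t)) (m k : ℕ)
    (H : ∀ j < k, {t : ℝ | skTime Mp m j < t ∧
        |Mp t - Mp (skTime Mp m j)| = (2 : ℝ) ^ (-(m : ℤ))}.Nonempty) :
    skTime Wp m k = Ap (skTime Mp m k) ∧ Wp (skTime Wp m k) = Mp (skTime Mp m k) := by
  have hεpos : (0:ℝ) < (2 : ℝ) ^ (-(m : ℤ)) := by positivity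
  induction k with
  | zero => simp [skTime, hA0, hMW 0]
  | succ k ih =>
    obtain ⟨hs, hw⟩ := ih (fun j hj => H j (Nat.lt_succ_of_lt hj))
    have hne : {t : ℝ | skTime Mp m k < t ∧
        |Mp t - Mp (skTime Mp m k)| = (2 : ℝ) ^ (-(m : ℤ))}.Nonempty :=
      H k (Nat.lt_succ_self k)
    have hbdd : BddBelow {t : ℝ | skTime Mp m k < t ∧
        |Mp t - Mp (skTime Mp m k)| = (2 : ℝ) ^ (-(m : ℤ))} :=
      ⟨skTime Mp m k, fun t ht => ht.1.le⟩
    have hMc : Continuous Mp := by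
      have : Mp = fun t => Wp (Ap t) := funext hMW
      rw [this]; exact hWc.comp hAc
    have hτ1 : skTime Mp m (k + 1) = sInf {t : ℝ | skTime Mp m k < t ∧
        |Mp t - Mp (skTime Mp m k)| = (2 : ℝ) ^ (-(m : ℤ))} := by rw [skTime]
    have hτcl : skTime Mp m (k + 1) ∈ closure {t : ℝ | skTime Mp m k < t ∧
        |Mp t - Mp (skTime Mp m k)| = (2 : ℝ) ^ (-(m : ℤ))} := by
      rw [hτ1]; exact csInf_mem_closure hne hbdd
    have heq : |Mp (skTime Mp m (k + 1)) - Mp (skTime Mp m k)| = (2 : ℝ) ^ (-(m : ℤ)) := by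
      have hcl : IsClosed {t : ℝ | |Mp t - Mp (skTime Mp m k)| = (2 : ℝ) ^ (-(m : ℤ))} :=
        isClosed_eq ((hMc.sub continuous_const).abs) continuous_const
      exact (hcl.closure_subset_iff.mpr fun t ht => ht.2) hτcl
    have hτge : skTime Mp m k ≤ skTime Mp m (k + 1) := by
      rw [hτ1]; exact le_csInf hne fun t ht => ht.1.le
    have hτgt : skTime Mp m k < skTime Mp m (k + 1) := by
      rcases hτge.lt_or_eq with h | h
      · exact h
      · rw [← h, sub_self, abs_zero] at heq; exact absurd heq.symm hεpos.ne'
    have hAlt : Ap (skTime Mp m k) < Ap (skTime Mp m (k + 1)) := by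
      rcases (hAm hτgt.le).lt_or_eq with h | h
      · exact h
      · exfalso
        have : Mp (skTime Mp m (k + 1)) = Mp (skTime Mp m k) := by
          rw [hMW, hMW, h]
        rw [this, sub_self, abs_zero] at heq
        exact absurd heq.symm hεpos.ne'
    have hmem : Ap (skTime Mp m (k + 1)) ∈ {s : ℝ | skTime Wp m k < s ∧
        |Wp s - Wp (skTime Wp m k)| = (2 : ℝ) ^ (-(m : ℤ))} := by
      refine ⟨?_, ?_⟩
      · rw [hs]; exact hAlt
      · rw [hw, ← hMW]; exact heq
    have hlb : ∀ s ∈ {s : ℝ | skTime Wp m k < s ∧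
        |Wp s - Wp (skTime Wp m k)| = (2 : ℝ) ^ (-(m : ℤ))},
        Ap (skTime Mp m (k + 1)) ≤ s := by
      intro s hsS
      by_contra hlt
      push_neg at hlt
      have hs_gt : Ap (skTime Mp m k) < s := by rw [← hs]; exact hsS.1
      obtain ⟨t, ht, hAt⟩ := intermediate_value_Ioo hτgt.le hAc.continuousOn ⟨hs_gt, hlt⟩
      have htS : t ∈ {t : ℝ | skTime Mp m k < t ∧
          |Mp t - Mp (skTime Mp m k)| = (2 : ℝ) ^ (-(m : ℤ))} := by
        refine ⟨ht.1, ?_⟩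
        rw [hMW t, hMW (skTime Mp m k), hAt, ← hs]
        exact hsS.2
      have hle : skTime Mp m (k + 1) ≤ t := by rw [hτ1]; exact csInf_le hbdd htS
      exact absurd hle (not_le.mpr ht.2)
    have hs1 : skTime Wp m (k + 1) = sInf {s : ℝ | skTime Wp m k < s ∧
        |Wp s - Wp (skTime Wp m k)| = (2 : ℝ) ^ (-(m : ℤ))} := by rw [skTime]
    have hfin : skTime Wp m (k + 1) = Ap (skTime Mp m (k + 1)) := by
      rw [hs1]
      exact le_antisymm (csInf_le ⟨skTime Wp m k, fun x hx => hx.1.le⟩ hmem)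
        (le_csInf ⟨_, hmem⟩ hlb)
    exact ⟨hfin, by rw [hfin, ← hMW]⟩

/-- DDS time change identifies the level-crossing times of `M` with the Skorohod
times of its DDS Brownian motion `W`: `s_m(k) = ⟨M⟩_{τ_m(k)}` and
`W(s_m(k)) = M(τ_m(k))` whenever `τ_m(k)` is finite (all defining sets nonempty).
Here `A = ⟨M⟩` is the quadratic variation and `M(t) = W(A(t))`. -/
theorem dds_skorohod_times {Ω : Type} [MeasurableSpace Ω] (P : Measure Ω)
    [IsProbabilityMeasure P] (M W : ℝ → Ω → ℝ) (A : ℝ → Ω → ℝ)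
    (hW : IsStandardBM P W)
    (hA0 : ∀ ω, A 0 ω = 0) (hAcont : ∀ ω, Continuous fun t => A t ω)
    (hAmono : ∀ ω, Monotone fun t => A t ω)
    (hDDS : ∀ t ω, M t ω = W (A t ω) ω) (m : ℕ) :
    ∀ᵐ ω ∂P, ∀ k : ℕ,
      (∀ j < k, {t : ℝ | skTime (fun u => M u ω) m j < t ∧
          |M t ω - M (skTime (fun u => M u ω) m j) ω| = (2 : ℝ) ^ (-(m : ℤ))}.Nonempty) →
      skTime (fun u => W u ω) m k = A (skTime (fun u => M u ω) m k) ω ∧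
      W (skTime (fun u => W u ω) m k) ω = M (skTime (fun u => M u ω) m k) ω := by
  refine Filter.Eventually.of_forall fun ω k H => ?_
  exact skTime_time_change (fun u => W u ω) (fun u => A u ω) (fun u => M u ω)
    (hW.2.2.1 ω) (hAcont ω) (hAmono ω) (hA0 ω) (fun t => hDDS t ω) m k H
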